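/- Let X be a quasi-compact quasi-separated scheme. A subset E ⊆ X is pro-constructible if and only if there exists an affine scheme X' and a morphism f : X' → X with E = f(X'). -/

import Mathlib

open AlgebraicGeometry Topology TopologicalSpace Set

universe u

def IsRetrocompact' {X : Type*} [TopologicalSpace X] (s : Set X) : Prop :=
  ∀ U : Set X, IsOpen U → IsCompact U → IsCompact (s ∩ U)

/-- The constructible (patch) topology: generated by retrocompact opens and their
complements.  Its closed sets are the pro-constructible sets. -/
def constructibleTop (X : Type*) [TopologicalSpace X] : TopologicalSpace X :=
  TopologicalSpace.generateFrom
    {s | (IsOpen s ∧ IsRetrocompact' s) ∨ (∃ u : Set X, IsOpen u ∧ IsRetrocompact' u ∧ s = uᶜ)}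

/-- A subset is pro-constructible iff it is closed in the constructible topology. -/
def IsProconstructible {X : Type*} [TopologicalSpace X] (E : Set X) : Prop :=
  IsClosed[constructibleTop X] E

section Top

variable {X Y : Type*} [TopologicalSpace X] [TopologicalSpace Y]

lemma isRetrocompact'_of_isCompact_isOpen [QuasiSeparatedSpace X] {s : Set X}
    (hs : IsOpen s) (hc : IsCompact s) : IsRetrocompact' s :=
  fun U hU hUc => QuasiSeparatedSpace.inter_isCompact s U hs hc hU hUc

lemma IsRetrocompact'.isCompact [CompactSpace X] {s : Set X} (h : IsRetrocompact' s) :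
    IsCompact s := by
  simpa using h univ isOpen_univ isCompact_univ

/-- Key continuity lemma for patch topologies. -/
lemma patch_continuous [QuasiSeparatedSpace X] [CompactSpace Y] {φ : X → Y}
    (hφ : Continuous φ) (hqc : ∀ V : Set Y, IsOpen V → IsCompact V → IsCompact (φ ⁻¹' V)) :
    Continuous[constructibleTop X, constructibleTop Y] φ := by
  rw [constructibleTop, constructibleTop, continuous_generateFrom_iff]
  rintro s (⟨hso, hsr⟩ | ⟨u, huo, hur, rfl⟩)
  · exact isOpen_generateFrom_of_mem <| Or.inl ⟨hso.preimage hφ,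
      isRetrocompact'_of_isCompact_isOpen (hso.preimage hφ) (hqc s hso hsr.isCompact)⟩
  · rw [Set.preimage_compl]
    exact isOpen_generateFrom_of_mem <| Or.inr ⟨φ ⁻¹' u, huo.preimage hφ,
      isRetrocompact'_of_isCompact_isOpen (huo.preimage hφ) (hqc u huo hur.isCompact), rfl⟩

lemma Homeomorph.isRetrocompact'_preimage (h : X ≃ₜ Y) {s : Set Y} (hs : IsRetrocompact' s) :
    IsRetrocompact' (h ⁻¹' s) := by
  intro U hU hUc
  have e1 : h ⁻¹' s ∩ U = h.symm '' (s ∩ h '' U) := by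
    ext x
    constructor
    · rintro ⟨hx1, hx2⟩
      exact ⟨h x, ⟨hx1, ⟨x, hx2, rfl⟩⟩, h.symm_apply_apply x⟩
    · rintro ⟨y, ⟨hy1, ⟨z, hz, rfl⟩⟩, rfl⟩
      simpa [h.symm_apply_apply] using ⟨hy1, hz⟩
  rw [e1]
  exact ((hs _ (h.isOpenMap _ hU) (hUc.image h.continuous)).image h.symm.continuous)

lemma Homeomorph.patch_continuous (h : X ≃ₜ Y) :
    Continuous[constructibleTop X, constructibleTop Y] h := by
  rw [constructibleTop, constructibleTop, continuous_generateFrom_iff]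
  rintro s (⟨hso, hsr⟩ | ⟨u, huo, hur, rfl⟩)
  · exact isOpen_generateFrom_of_mem <| Or.inl
      ⟨hso.preimage h.continuous, h.isRetrocompact'_preimage hsr⟩
  · rw [Set.preimage_compl]
    exact isOpen_generateFrom_of_mem <| Or.inr ⟨h ⁻¹' u, huo.preimage h.continuous,
      h.isRetrocompact'_preimage hur, rfl⟩

lemma patch_compactSpace_of_homeomorph (h : X ≃ₜ Y)
    (hX : @CompactSpace X (constructibleTop X)) : @CompactSpace Y (constructibleTop Y) := by
  refine @CompactSpace.mk Y (constructibleTop Y) ?_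
  have h1 : @IsCompact X (constructibleTop X) Set.univ :=
    @CompactSpace.isCompact_univ X (constructibleTop X) hX
  have h2 := @IsCompact.image X Y (constructibleTop X) (constructibleTop Y) Set.univ
    h h1 h.patch_continuous
  rwa [Set.image_univ, h.surjective.range_eq] at h2

lemma compactSpace_generateFrom_uf {α : Type*} (g : Set (Set α))
    (H : ∀ F : Ultrafilter α, ∃ x : α, ∀ s ∈ g, x ∈ s → s ∈ F) :
    @CompactSpace α (TopologicalSpace.generateFrom g) := by
  letI := TopologicalSpace.generateFrom g
  constructor
  rw [isCompact_iff_ultrafilter_le_nhds]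
  intro F _
  obtain ⟨x, hx⟩ := H F
  refine ⟨x, Set.mem_univ _, ?_⟩
  rw [nhds_generateFrom]
  exact le_iInf₂ fun s hs => Filter.le_principal_iff.mpr (hx s hs.2 hs.1)

end Top

section Spec

variable {A : Type u} [CommRing A]

open PrimeSpectrum

lemma patch_compactSpace_primeSpectrum (A : Type u) [CommRing A] :
    @CompactSpace (PrimeSpectrum A) (constructibleTop (PrimeSpectrum A)) := by
  refine compactSpace_generateFrom_uf _ fun F => ?_
  classical
  set p : Ideal A :=
    { carrier := {a | {x : PrimeSpectrum A | a ∈ x.asIdeal} ∈ F}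
      zero_mem' := by
        have : {x : PrimeSpectrum A | (0:A) ∈ x.asIdeal} = Set.univ := by
          ext x; simp
        rw [Set.mem_setOf_eq, this]; exact Filter.univ_mem
      add_mem' := by
        intro a b ha hb
        filter_upwards [ha, hb] with x hxa hxb
        exact x.asIdeal.add_mem hxa hxb
      smul_mem' := by
        intro c a ha
        filter_upwards [ha] with x hx
        exact x.asIdeal.smul_mem c hx } with hp
  have hp_ne : p ≠ ⊤ := by
    intro h
    have h1 : (1 : A) ∈ p := h ▸ Submodule.mem_top
    have h2 : {x : PrimeSpectrum A | (1:A) ∈ x.asIdeal} ∈ F := h1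
    have he : {x : PrimeSpectrum A | (1:A) ∈ x.asIdeal} = ∅ :=
      Set.eq_empty_iff_forall_notMem.mpr fun x hx =>
        x.2.ne_top ((Ideal.eq_top_iff_one _).mpr hx)
    rw [he] at h2
    exact F.empty_notMem h2
  have hprime : p.IsPrime := by
    refine ⟨hp_ne, ?_⟩
    intro a b hab
    replace hab : {x : PrimeSpectrum A | a * b ∈ x.asIdeal} ∈ F := hab
    have he : {x : PrimeSpectrum A | a * b ∈ x.asIdeal}
        = {x : PrimeSpectrum A | a ∈ x.asIdeal} ∪ {x : PrimeSpectrum A | b ∈ x.asIdeal} := by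
      ext x
      simp [x.2.mul_mem_iff_mem_or_mem]
    rw [he] at hab
    exact (Ultrafilter.union_mem_iff.mp hab).imp (fun h => h) (fun h => h)
  refine ⟨⟨p, hprime⟩, ?_⟩
  rintro s (⟨hso, hsr⟩ | ⟨u, huo, hur, rfl⟩) hmem
  · obtain ⟨tf, rfl⟩ := PrimeSpectrum.isCompact_isOpen_iff.mp ⟨hsr.isCompact, hso⟩
    rw [Set.mem_compl_iff, PrimeSpectrum.mem_zeroLocus, Set.not_subset] at hmem
    obtain ⟨a, hat, hap⟩ := hmem
    have haF : {x : PrimeSpectrum A | a ∉ x.asIdeal} ∈ F := by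
      have hc := Ultrafilter.compl_mem_iff_notMem
        (s := {x : PrimeSpectrum A | a ∈ x.asIdeal}) (f := F)
      exact hc.mpr hap
    refine Filter.mem_of_superset haF ?_
    intro x hx
    rw [Set.mem_compl_iff, PrimeSpectrum.mem_zeroLocus, Set.not_subset]
    exact ⟨a, hat, hx⟩
  · obtain ⟨tf, rfl⟩ := PrimeSpectrum.isCompact_isOpen_iff.mp ⟨hur.isCompact, huo⟩
    simp only [Set.mem_compl_iff, not_not] at hmem
    rw [PrimeSpectrum.mem_zeroLocus] at hmem
    rw [compl_compl]
    have he : PrimeSpectrum.zeroLocus (tf : Set A)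
        = ⋂ a ∈ (tf : Set A), {x : PrimeSpectrum A | a ∈ x.asIdeal} := by
      ext x; simp [PrimeSpectrum.mem_zeroLocus, Set.subset_def]
    rw [he]
    exact (Filter.biInter_mem tf.finite_toSet).mpr fun a ha => hmem ha

end Spec

section Scheme

open CategoryTheory CategoryTheory.Limits

lemma quasiCompact_of_compactSpace' {X Y : Scheme.{u}} (f : X ⟶ Y) [CompactSpace X]
    [QuasiSeparatedSpace Y] : QuasiCompact f := by
  have h2 : QuasiSeparated (terminal.from Y) :=
    (quasiSeparatedSpace_iff_quasiSeparated Y).mp ‹_›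
  have h1 : QuasiCompact (f ≫ terminal.from Y) := by
    rw [terminal.comp_from]
    exact (compactSpace_iff_quasiCompact X).mp ‹_›
  haveI : MorphismProperty.IsMultiplicative (C := Scheme) @QuasiCompact :=
    { id_mem := fun X => inferInstance
      comp_mem := fun f g hf hg => @quasiCompact_comp _ _ _ f g hf hg }
  have hpost : MorphismProperty.HasOfPostcompProperty (C := Scheme)
      @QuasiCompact @QuasiSeparated := by
    infer_instance
  exact MorphismProperty.of_postcomp (W := @QuasiCompact) (W' := @QuasiSeparated)
    f (terminal.from Y) h2 h1

lemma patch_t2 (X : Scheme.{u}) [QuasiSeparatedSpace X] : @T2Space X (constructibleTop X) := by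
  have key : ∀ x y : X, ∀ U : Set X, IsOpen U → x ∈ U → y ∉ U →
      ∃ u v : Set X, IsOpen[constructibleTop X] u ∧ IsOpen[constructibleTop X] v ∧
        x ∈ u ∧ y ∈ v ∧ Disjoint u v := by
    intro x y U hUo hxU hyU
    obtain ⟨V, hV, hxV, hVU⟩ := TopologicalSpace.Opens.isBasis_iff_nbhd.mp
      X.isBasis_affineOpens (show x ∈ (⟨U, hUo⟩ : X.Opens) from hxU)
    have hVo : IsOpen (V.1 : Set X) := V.2
    have hVc : IsCompact (V.1 : Set X) := IsAffineOpen.isCompact hV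
    refine ⟨(V.1 : Set X), (V.1 : Set X)ᶜ, ?_, ?_, hxV, fun h => hyU (hVU h),
      disjoint_compl_right⟩
    · exact isOpen_generateFrom_of_mem <| Or.inl ⟨hVo,
        isRetrocompact'_of_isCompact_isOpen hVo hVc⟩
    · exact isOpen_generateFrom_of_mem <| Or.inr ⟨(V.1 : Set X), hVo,
        isRetrocompact'_of_isCompact_isOpen hVo hVc, rfl⟩
  refine @T2Space.mk X (constructibleTop X) ?_
  intro x y hxy
  obtain ⟨U, hUo, hxor⟩ := exists_isOpen_xor'_mem hxy
  rcases hxor with ⟨hx, hy⟩ | ⟨hy, hx⟩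
  · exact key x y U hUo hx hy
  · obtain ⟨u, v, hu, hv, hyu, hxv, hd⟩ := key y x U hUo hy hx
    exact ⟨v, u, hv, hu, hxv, hyu, hd.symm⟩

lemma patch_compactSpace_of_isAffine (X : Scheme.{u}) [IsAffine X] :
    @CompactSpace X (constructibleTop X) := by
  have h := patch_compactSpace_primeSpectrum Γ(X, ⊤)
  exact patch_compactSpace_of_homeomorph (Scheme.homeoOfIso X.isoSpec.symm) h

lemma isProconstructible_range {X Y : Scheme.{u}} [CompactSpace Y] [QuasiSeparatedSpace Y]
    [IsAffine X] (f : X ⟶ Y) : IsProconstructible (Set.range f.base) := by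
  haveI := quasiCompact_of_compactSpace' f
  have hcont : Continuous[constructibleTop X, constructibleTop Y] f.base :=
    patch_continuous f.continuous
      (fun V hV hVc => QuasiCompact.isCompact_preimage V hV hVc)
  have h1 := @CompactSpace.isCompact_univ X (constructibleTop X) (patch_compactSpace_of_isAffine X)
  have h2 := @IsCompact.image X Y (constructibleTop X) (constructibleTop Y) _ f.base h1 hcont
  rw [Set.image_univ] at h2
  exact @IsCompact.isClosed Y (constructibleTop Y) (patch_t2 Y) _ h2

end Scheme

section Forward

open PrimeSpectrum

variable {A : Type u} [CommRing A]

/-- The set of generators of the constructible topology. -/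
private def genSet (X : Type*) [TopologicalSpace X] : Set (Set X) :=
  {s | (IsOpen s ∧ IsRetrocompact' s) ∨ (∃ u : Set X, IsOpen u ∧ IsRetrocompact' u ∧ s = uᶜ)}

private lemma key_ind (p : PrimeSpectrum A) :
    ∀ c : Set (Set (PrimeSpectrum A)), c.Finite → c ⊆ genSet (PrimeSpectrum A) → p ∈ ⋂₀ c →
    ∃ (Fa : A) (G : Finset A), Fa ∉ p.asIdeal ∧ (∀ g ∈ G, g ∈ p.asIdeal) ∧
      {x : PrimeSpectrum A | Fa ∉ x.asIdeal ∧ ∀ g ∈ G, g ∈ x.asIdeal} ⊆ ⋂₀ c := by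
  classical
  intro c hc
  refine Set.Finite.induction_on
    (motive := fun c _ => c ⊆ genSet (PrimeSpectrum A) → p ∈ ⋂₀ c →
      ∃ (Fa : A) (G : Finset A), Fa ∉ p.asIdeal ∧ (∀ g ∈ G, g ∈ p.asIdeal) ∧
        {x : PrimeSpectrum A | Fa ∉ x.asIdeal ∧ ∀ g ∈ G, g ∈ x.asIdeal} ⊆ ⋂₀ c)
    c hc ?_ ?_
  · intro _ _
    refine ⟨1, ∅, fun h1 => p.2.ne_top ((Ideal.eq_top_iff_one _).mpr h1), by simp, by simp⟩
  · rintro a s ha hs ih hsub hmem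
    rw [Set.sInter_insert] at hmem
    obtain ⟨Fa, G, hF, hG, hsub2⟩ :=
      ih (fun t ht => hsub (Set.mem_insert_of_mem a ht)) hmem.2
    have hgen : a ∈ genSet (PrimeSpectrum A) := hsub (Set.mem_insert a s)
    rw [Set.sInter_insert]
    rcases hgen with ⟨ho, hr⟩ | ⟨u, huo, hur, rfl⟩
    · obtain ⟨tf, rfl⟩ := isCompact_isOpen_iff.mp ⟨hr.isCompact, ho⟩
      have hpmem : p ∈ (zeroLocus (tf : Set A))ᶜ := hmem.1
      rw [Set.mem_compl_iff, mem_zeroLocus, Set.not_subset] at hpmem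
      obtain ⟨aEl, hat, hap⟩ := hpmem
      refine ⟨Fa * aEl, G, fun h => (p.2.mem_or_mem h).elim hF hap, hG, ?_⟩
      rintro x ⟨hx1, hx2⟩
      refine ⟨?_, hsub2 ⟨fun h => hx1 (Ideal.mul_mem_right aEl _ h), hx2⟩⟩
      rw [Set.mem_compl_iff, mem_zeroLocus, Set.not_subset]
      exact ⟨aEl, hat, fun h => hx1 (Ideal.mul_mem_left _ Fa h)⟩
    · obtain ⟨tf, rfl⟩ := isCompact_isOpen_iff.mp ⟨hur.isCompact, huo⟩
      have hpmem : p ∈ zeroLocus (tf : Set A) := by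
        have := hmem.1
        rwa [compl_compl] at this
      refine ⟨Fa, G ∪ tf, hF, ?_, ?_⟩
      · intro g hg
        rcases Finset.mem_union.mp hg with h | h
        · exact hG g h
        · exact (mem_zeroLocus _ _).mp hpmem h
      · rintro x ⟨hx1, hx2⟩
        refine ⟨?_, hsub2 ⟨hx1, fun g hg => hx2 g (Finset.mem_union_left _ hg)⟩⟩
        rw [compl_compl]
        exact (mem_zeroLocus _ _).mpr fun g hg => hx2 g (Finset.mem_union_right _ hg)

theorem exists_comap_range (A : Type u) [CommRing A] (E : Set (PrimeSpectrum A))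
    (hE : IsProconstructible E) :
    ∃ (R : Type u) (_ : CommRing R) (φ : A →+* R),
      Set.range (PrimeSpectrum.comap φ) = E := by
  classical
  haveI : ∀ x : E, ((x : PrimeSpectrum A).asIdeal).IsPrime := fun x => (x : PrimeSpectrum A).2
  let K : E → Type u := fun x => FractionRing (A ⧸ (x : PrimeSpectrum A).asIdeal)
  let R : Type u := Π x : E, K x
  let φc : ∀ x : E, A →+* K x := fun x =>
    (algebraMap (A ⧸ (x : PrimeSpectrum A).asIdeal) (K x)).comp
      (Ideal.Quotient.mk (x : PrimeSpectrum A).asIdeal)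
  have hker : ∀ (x : E) (a : A), φc x a = 0 ↔ a ∈ (x : PrimeSpectrum A).asIdeal := by
    intro x a
    constructor
    · intro h
      have h2 : algebraMap (A ⧸ (x : PrimeSpectrum A).asIdeal) (K x)
          (Ideal.Quotient.mk _ a) = 0 := h
      rw [← map_zero (algebraMap (A ⧸ (x : PrimeSpectrum A).asIdeal) (K x))] at h2
      have := IsFractionRing.injective (A ⧸ (x : PrimeSpectrum A).asIdeal) (K x) h2
      rwa [Ideal.Quotient.eq_zero_iff_mem] at this
    · intro h
      have : Ideal.Quotient.mk (x : PrimeSpectrum A).asIdeal a = 0 :=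
        Ideal.Quotient.eq_zero_iff_mem.mpr h
      show algebraMap (A ⧸ (x : PrimeSpectrum A).asIdeal) (K x)
        (Ideal.Quotient.mk (x : PrimeSpectrum A).asIdeal a) = 0
      rw [this, map_zero]
  let φ : A →+* R := Pi.ringHom φc
  refine ⟨R, inferInstance, φ, ?_⟩
  apply Set.eq_of_subset_of_subset
  · -- range ⊆ E
    rintro _ ⟨q, rfl⟩
    by_contra hp
    set p := PrimeSpectrum.comap φ q with hpdef
    -- p ∈ Eᶜ which is patch-open
    have hbasis := @TopologicalSpace.isTopologicalBasis_of_subbasis (PrimeSpectrum A)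
      (constructibleTop (PrimeSpectrum A)) (genSet (PrimeSpectrum A)) rfl
    have hEc : IsOpen[constructibleTop (PrimeSpectrum A)] Eᶜ := hE.isOpen_compl
    obtain ⟨b, hb, hpb, hbE⟩ :=
      @TopologicalSpace.IsTopologicalBasis.exists_subset_of_mem_open (PrimeSpectrum A)
        (constructibleTop (PrimeSpectrum A)) _ hbasis p Eᶜ hp hEc
    obtain ⟨c, ⟨hcfin, hcsub⟩, rfl⟩ := hb
    obtain ⟨Fa, G, hF, hG, hsub2⟩ := key_ind p c hcfin hcsub hpb
    -- now the algebra argument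
    have hFq : φ Fa ∉ q.asIdeal := by
      intro h
      exact hF (by rwa [hpdef, comap_asIdeal, Ideal.mem_comap])
    have hGq : ∀ g ∈ G, φ g ∈ q.asIdeal := by
      intro g hg
      have : g ∈ p.asIdeal := hG g hg
      rwa [hpdef, comap_asIdeal, Ideal.mem_comap] at this
    -- epsilon and delta elements
    let ε : A → R := fun g x => if φc x g = 0 then 0 else 1
    let δ : A → R := fun g x => if h : φc x g = 0 then 0 else (φc x g)⁻¹
    have hεδ : ∀ g : A, φ g * δ g = ε g := by
      intro g
      funext x
      show φc x g * (if h : φc x g = 0 then 0 else (φc x g)⁻¹) = if φc x g = 0 then 0 else 1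
      by_cases h : φc x g = 0
      · simp [h]
      · simp [h, mul_inv_cancel₀ h]
    have hεq : ∀ g ∈ G, ε g ∈ q.asIdeal := by
      intro g hg
      rw [← hεδ g]
      exact Ideal.mul_mem_right _ _ (hGq g hg)
    -- the element that must vanish
    have hcontra : ∃ x : E, Fa ∉ (x : PrimeSpectrum A).asIdeal ∧
        ∀ g ∈ G, g ∈ (x : PrimeSpectrum A).asIdeal := by
      by_contra hcon
      push_neg at hcon
      have hzero : φ Fa * ∏ g ∈ G, (1 - ε g) = 0 := by
        funext x
        show φc x Fa * (∏ g ∈ G, (1 - ε g)) x = 0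
        rw [Finset.prod_apply]
        by_cases hFx : Fa ∈ (x : PrimeSpectrum A).asIdeal
        · rw [(hker x Fa).mpr hFx, zero_mul]
        · obtain ⟨g, hg, hgx⟩ := hcon x hFx
          have : (1 - ε g) x = 0 := by
            show (1 : K x) - (if φc x g = 0 then 0 else 1) = 0
            rw [if_neg (fun h => hgx ((hker x g).mp h))]
            ring
          rw [Finset.prod_eq_zero hg this, mul_zero]
      have hmemq : φ Fa * ∏ g ∈ G, (1 - ε g) ∈ q.asIdeal := by
        rw [hzero]; exact q.asIdeal.zero_mem
      rcases q.2.mem_or_mem hmemq with h | h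
      · exact hFq h
      · obtain ⟨g, hg, hmem⟩ := (Ideal.IsPrime.prod_mem_iff).mp h
        have : (1 : R) ∈ q.asIdeal := by
          have h1 : (1 : R) - ε g + ε g = 1 := by ring
          rw [← h1]
          exact q.asIdeal.add_mem hmem (hεq g hg)
        exact q.2.ne_top ((Ideal.eq_top_iff_one _).mpr this)
    obtain ⟨x, hx1, hx2⟩ := hcontra
    have : (x : PrimeSpectrum A) ∈ ⋂₀ c := hsub2 ⟨hx1, hx2⟩
    exact (hbE this) x.2
  · -- E ⊆ range
    intro x hx
    haveI : ((⟨x, hx⟩ : E) : PrimeSpectrum A).asIdeal.IsPrime := x.2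
    let π : R →+* K ⟨x, hx⟩ := Pi.evalRingHom K ⟨x, hx⟩
    haveI : (RingHom.ker π).IsPrime := by
      apply RingHom.ker_isPrime
    refine ⟨⟨RingHom.ker π, inferInstance⟩, ?_⟩
    ext1
    rw [comap_asIdeal]
    show Ideal.comap φ (RingHom.ker π) = x.asIdeal
    ext a
    rw [Ideal.mem_comap, RingHom.mem_ker]
    show φc ⟨x, hx⟩ a = 0 ↔ a ∈ x.asIdeal
    exact hker ⟨x, hx⟩ a

end Forward

section Main

open CategoryTheory CategoryTheory.Limits

lemma affine_spec_case (A : CommRingCat.{u}) (E : Set (Spec A)) (hE : IsProconstructible E) :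
    ∃ (X' : Scheme.{u}) (_ : IsAffine X') (f : X' ⟶ Spec A), Set.range f.base = E := by
  obtain ⟨R, _, φ, hφ⟩ := exists_comap_range ↥A E hE
  exact ⟨Spec (CommRingCat.of R), inferInstance,
    Spec.map (CommRingCat.ofHom φ : A ⟶ CommRingCat.of R), hφ⟩

lemma affine_case (X : Scheme.{u}) [IsAffine X] (E : Set X) (hE : IsProconstructible E) :
    ∃ (X' : Scheme.{u}) (_ : IsAffine X') (f : X' ⟶ X), Set.range f.base = E := by
  let e := X.isoSpec
  let h : X ≃ₜ Spec Γ(X, ⊤) := Scheme.homeoOfIso e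
  have hE' : IsProconstructible (h.symm ⁻¹' E) :=
    @IsClosed.preimage _ _ (constructibleTop _) (constructibleTop _) h.symm
      (Homeomorph.patch_continuous h.symm) E hE
  obtain ⟨X', hX', g, hg⟩ := affine_spec_case Γ(X, ⊤) (h.symm ⁻¹' E) hE'
  refine ⟨X', hX', g ≫ e.inv, ?_⟩
  rw [show ⇑(g ≫ e.inv) = e.inv ∘ g from funext fun x => Scheme.Hom.comp_apply g e.inv x,
    Set.range_comp, hg]
  exact h.symm.image_preimage E

lemma restrict_case (X : Scheme.{u}) [CompactSpace X] [QuasiSeparatedSpace X]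
    (U : X.Opens) (hU : IsAffineOpen U) (E : Set X) (hE : IsProconstructible E) :
    ∃ (X' : Scheme.{u}) (_ : IsAffine X') (f : X' ⟶ X),
      Set.range f.base = E ∩ (U : Set X) := by
  haveI : IsAffine U.toScheme := hU
  haveI := quasiCompact_of_compactSpace' U.ι
  have hcont : Continuous[constructibleTop U.toScheme, constructibleTop X] U.ι.base :=
    patch_continuous U.ι.continuous
      (fun V hV hVc => QuasiCompact.isCompact_preimage V hV hVc)
  have hE' : IsProconstructible (U.ι.base ⁻¹' E) :=
    @IsClosed.preimage _ _ (constructibleTop _) (constructibleTop _) U.ι.base hcont E hE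
  obtain ⟨X', hX', g, hg⟩ := affine_case U.toScheme (U.ι.base ⁻¹' E) hE'
  refine ⟨X', hX', g ≫ U.ι, ?_⟩
  rw [show ⇑(g ≫ U.ι) = U.ι ∘ g from funext fun x => Scheme.Hom.comp_apply g U.ι x,
    Set.range_comp, hg,
    Set.image_preimage_eq_inter_range, Scheme.Opens.range_ι]

/-- On a quasi-compact quasi-separated scheme, a subset is pro-constructible iff it is
the image of a morphism from an affine scheme. -/
theorem stmt1 (X : Scheme.{u}) [CompactSpace X] [QuasiSeparatedSpace X] (E : Set X) :
    IsProconstructible E ↔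
      ∃ (X' : Scheme.{u}) (_ : IsAffine X') (f : X' ⟶ X), E = Set.range f.base := by
  constructor
  · intro hE
    obtain ⟨s, hsfin, hsU⟩ := (isCompact_and_isOpen_iff_finite_and_eq_biUnion_affineOpens
      (U := (Set.univ : Set X))).mp ⟨CompactSpace.isCompact_univ, isOpen_univ⟩
    haveI : Finite ↥s := hsfin.to_subtype
    choose Y hY f hf using fun i : s => restrict_case X i.1.1 i.1.2 E hE
    haveI : ∀ i : s, IsAffine (Y i) := hY
    refine ⟨∐ Y, inferInstance, Sigma.desc f, ?_⟩
    have hrange : Set.range (Sigma.desc f).base = ⋃ i, Set.range (f i).base := by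
      apply Set.eq_of_subset_of_subset
      · rintro _ ⟨z, rfl⟩
        obtain ⟨i, y, rfl⟩ := (⟨((sigmaMk Y).symm z).1, ((sigmaMk Y).symm z).2,
          by rw [← sigmaMk_mk]; exact (sigmaMk Y).apply_symm_apply z⟩ :
            ∃ i y, (Sigma.ι Y i) y = z)
        refine Set.mem_iUnion.mpr ⟨i, y, ?_⟩
        rw [← Scheme.Hom.comp_apply, Sigma.ι_desc]
      · intro x hx
        obtain ⟨i, hi⟩ := Set.mem_iUnion.mp hx
        obtain ⟨y, hy⟩ := hi
        refine ⟨(Sigma.ι Y i).base y, ?_⟩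
        rw [← Scheme.Hom.comp_apply, Sigma.ι_desc, hy]
    rw [hrange]
    have : ⋃ i : s, Set.range (f i).base = ⋃ i : s, E ∩ (i.1.1 : Set X) := by
      exact Set.iUnion_congr fun i => hf i
    rw [this, ← Set.inter_iUnion]
    have huniv : ⋃ i : s, (i.1.1 : Set X) = Set.univ := by
      rw [hsU]
      exact (Set.iUnion_subtype _ _).trans rfl |>.symm ▸ rfl
    rw [huniv, Set.inter_univ]
  · rintro ⟨X', hX', g, rfl⟩
    haveI := hX'
    exact isProconstructible_range g

end Main
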